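/- Let a₀, a₁ ∈ ℝ with a₀ a₁ > 0 and T* = 1/(48 a₀ a₁). Then for u(r,t) = a₀/(1 − 48 a₀ a₁ t) · r⁴/(48 a₁) + 1/(36 a₁²) ln(1 − 48 a₀ a₁ t) + a₂: u(0,t) → −∞ as t ↗ T*, and for every r > 0, u(r,t) → +∞ as t ↗ T*. -/

import Mathlib

noncomputable section

/-- The explicit radial solution on the plane. -/
def U (a₀ a₁ a₂ r t : ℝ) : ℝ :=
  a₀ / (1 - 48 * a₀ * a₁ * t) * (r ^ 4 / (48 * a₁)) +
    1 / (36 * a₁ ^ 2) * Real.log (1 - 48 * a₀ * a₁ * t) + a₂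

open Filter Topology

/-- If `a₀a₁ > 0` and `T* = 1/(48a₀a₁)`: `u(0,t) → −∞` and, for every `r > 0`,
`u(r,t) → +∞` as `t ↗ T*`. -/
theorem stmt10 (a₀ a₁ a₂ : ℝ) (h : a₀ * a₁ > 0) :
    Filter.Tendsto (fun t => U a₀ a₁ a₂ 0 t)
      (nhdsWithin (1 / (48 * a₀ * a₁)) (Set.Iio (1 / (48 * a₀ * a₁)))) Filter.atBot ∧
    ∀ r : ℝ, r > 0 →
      Filter.Tendsto (fun t => U a₀ a₁ a₂ r t)
        (nhdsWithin (1 / (48 * a₀ * a₁)) (Set.Iio (1 / (48 * a₀ * a₁)))) Filter.atTop := by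
  have hc : (0:ℝ) < 48 * a₀ * a₁ := by nlinarith
  have ha₁ : a₁ ≠ 0 := by rintro rfl; simp at h
  set c : ℝ := 48 * a₀ * a₁ with hcdef
  set T : ℝ := 1 / c with hT
  -- the map g t = 1 - c t tends to 0⁺ as t → T⁻
  have hg : Tendsto (fun t : ℝ => 1 - c * t) (𝓝[<] T) (𝓝[>] 0) := by
    rw [tendsto_nhdsWithin_iff]
    constructor
    · have : Tendsto (fun t : ℝ => 1 - c * t) (𝓝 T) (𝓝 (1 - c * T)) := by
        exact (continuous_const.sub (continuous_const.mul continuous_id)).tendsto T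
      have hval : 1 - c * T = 0 := by
        simp [hT, hc.ne']
      rw [hval] at this
      exact this.mono_left nhdsWithin_le_nhds
    · filter_upwards [self_mem_nhdsWithin] with t ht
      have : t < T := ht
      have : c * t < c * T := by exact (mul_lt_mul_iff_right₀ hc).mpr this
      have hcT : c * T = 1 := by simp [hT, hc.ne']
      simp only [Set.mem_Ioi]
      linarith
  -- positive constant for the log coefficient
  have hL : (0:ℝ) < 1 / (36 * a₁ ^ 2) := by positivity
  constructor
  · -- r = 0 case
    have heq : (fun t => U a₀ a₁ a₂ 0 t)
        = fun t => 1 / (36 * a₁ ^ 2) * Real.log (1 - c * t) + a₂ := by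
      funext t; simp [U, hcdef]
    rw [heq]
    have hlog : Tendsto (fun t => Real.log (1 - c * t)) (𝓝[<] T) atBot :=
      Real.tendsto_log_nhdsGT_zero.comp hg
    exact tendsto_atBot_add_const_right _ a₂ (hlog.const_mul_atBot hL)
  · intro r hr
    set K : ℝ := a₀ * (r ^ 4 / (48 * a₁)) with hK
    have hKpos : 0 < K := by
      have : K = (a₀ * a₁) * r ^ 4 / (48 * a₁ ^ 2) := by
        rw [hK]; field_simp
      rw [this]; positivity
    -- rewrite U as (K + L * (s * log s)) * s⁻¹ + a₂ with s = 1 - c t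
    have heq : ∀ᶠ t in 𝓝[<] T, U a₀ a₁ a₂ r t
        = (K + 1 / (36 * a₁ ^ 2) * ((1 - c * t) * Real.log (1 - c * t)))
            * (1 - c * t)⁻¹ + a₂ := by
      filter_upwards [hg.eventually self_mem_nhdsWithin] with t ht
      have hs : (1 : ℝ) - c * t ≠ 0 := ne_of_gt ht
      simp only [U, hK, hcdef]
      have hs' : (1:ℝ) - 48 * a₀ * a₁ * t ≠ 0 := by rw [← hcdef]; exact hs
      field_simp
      have hs'' : (1:ℝ) - a₀ * a₁ * t * 48 ≠ 0 := by
        rw [show a₀ * a₁ * t * 48 = 48 * a₀ * a₁ * t by ring]; exact hs'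
      linear_combination (norm := ring_nf) (-48 * Real.log (1 - a₀ * a₁ * t * 48)) * mul_inv_cancel₀ hs''
    have hmul : Tendsto (fun t => (1 - c * t) * Real.log (1 - c * t)) (𝓝[<] T) (𝓝 0) := by
      have h0 : Tendsto (fun s : ℝ => s * Real.log s) (𝓝 0) (𝓝 0) := by
        have := Real.continuous_mul_log.tendsto 0
        simpa using this
      exact (h0.comp (hg.mono_right nhdsWithin_le_nhds))
    have hfac : Tendsto (fun t => K + 1 / (36 * a₁ ^ 2) * ((1 - c * t) * Real.log (1 - c * t)))
        (𝓝[<] T) (𝓝 K) := by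
      simpa only [mul_zero, add_zero] using (tendsto_const_nhds (x := K) (f := (𝓝[<] T))).add
        (hmul.const_mul (1 / (36 * a₁ ^ 2)))
    have hinv : Tendsto (fun t => (1 - c * t)⁻¹) (𝓝[<] T) atTop := by
      exact tendsto_inv_nhdsGT_zero.comp hg
    have := hfac.pos_mul_atTop hKpos hinv
    have hfinal := tendsto_atTop_add_const_right _ a₂ this
    exact hfinal.congr' (heq.mono fun t e => e.symm)
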